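/- For finite random variables A, B, E, U with joint distribution p(a,b,e,u) = p(a,b,e)p(u|a) (i.e., U − A − (B,E) forms a Markov chain), the identity [I(A;B) − I(A;E)] − [I(A;B|U) − I(A;E|U)] = I(B;U) − I(E;U) holds. -/
import Mathlib

open Finset

/-- `w` is a probability mass function on the finite sample space `Ω`. -/
def IsPMF {Ω : Type} [Fintype Ω] (w : Ω → ℝ) : Prop :=
  (∀ ω, 0 ≤ w ω) ∧ ∑ ω, w ω = 1

open scoped Classical in
/-- Probability that the random variable `X` takes the value `x`. -/
noncomputable def pr {Ω : Type} [Fintype Ω] (w : Ω → ℝ) {α : Type} (X : Ω → α) (x : α) : ℝ :=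
  ∑ ω, if X ω = x then w ω else 0

/-- Shannon entropy (in bits) of the random variable `X`. -/
noncomputable def H {Ω : Type} [Fintype Ω] (w : Ω → ℝ) {α : Type} [Fintype α] (X : Ω → α) : ℝ :=
  -∑ x, pr w X x * Real.logb 2 (pr w X x)

/-- Conditional entropy `H(X|Y)`. -/
noncomputable def condH {Ω : Type} [Fintype Ω] (w : Ω → ℝ) {α β : Type} [Fintype α] [Fintype β]
    (X : Ω → α) (Y : Ω → β) : ℝ :=
  H w (fun ω => (X ω, Y ω)) - H w Y

/-- Mutual information `I(X;Y)`. -/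
noncomputable def MI {Ω : Type} [Fintype Ω] (w : Ω → ℝ) {α β : Type} [Fintype α] [Fintype β]
    (X : Ω → α) (Y : Ω → β) : ℝ :=
  H w X + H w Y - H w (fun ω => (X ω, Y ω))

/-- Conditional mutual information `I(X;Y|Z)`. -/
noncomputable def cMI {Ω : Type} [Fintype Ω] (w : Ω → ℝ) {α β γ : Type}
    [Fintype α] [Fintype β] [Fintype γ] (X : Ω → α) (Y : Ω → β) (Z : Ω → γ) : ℝ :=
  condH w X Z - condH w X (fun ω => (Y ω, Z ω))

/-- `X` and `Y` are conditionally independent given `Z`, i.e. the Markov chain `X − Z − Y`. -/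
def CondIndep {Ω : Type} [Fintype Ω] (w : Ω → ℝ) {α β γ : Type}
    (X : Ω → α) (Y : Ω → β) (Z : Ω → γ) : Prop :=
  ∀ x y z, pr w (fun ω => (X ω, Y ω, Z ω)) (x, y, z) * pr w Z z =
    pr w (fun ω => (X ω, Z ω)) (x, z) * pr w (fun ω => (Y ω, Z ω)) (y, z)

section Aux

variable {Ω : Type} [Fintype Ω]

lemma pr_nonneg (w : Ω → ℝ) (hw : ∀ ω, 0 ≤ w ω) {α : Type} (X : Ω → α) (x : α) :
    0 ≤ pr w X x := by
  classical
  refine Finset.sum_nonneg fun ω _ => ?_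
  split
  · exact hw ω
  · exact le_refl 0

lemma pr_mono (w : Ω → ℝ) (hw : ∀ ω, 0 ≤ w ω) {α β : Type} (X : Ω → α) (Y : Ω → β)
    (x : α) (y : β) (h : ∀ ω, X ω = x → Y ω = y) : pr w X x ≤ pr w Y y := by
  classical
  refine Finset.sum_le_sum fun ω _ => ?_
  by_cases hx : X ω = x
  · simp [hx, h ω hx]
  · simp only [hx, if_false]
    split
    · exact hw ω
    · exact le_refl 0

lemma H_comp {α β : Type} [Fintype α] [Fintype β] (e : α ≃ β) (w : Ω → ℝ) (X : Ω → α) :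
    H w (fun ω => e (X ω)) = H w X := by
  classical
  unfold H
  congr 1
  rw [← Equiv.sum_comp e (fun y => pr w (fun ω => e (X ω)) y *
    Real.logb 2 (pr w (fun ω => e (X ω)) y))]
  refine Finset.sum_congr rfl fun x _ => ?_
  have : pr w (fun ω => e (X ω)) (e x) = pr w X x := by
    unfold pr
    refine Finset.sum_congr rfl fun ω _ => ?_
    simp [e.injective.eq_iff]
  rw [this]

/-- marginalizing out the second coordinate -/
lemma pr_marg (w : Ω → ℝ) {α β : Type} [Fintype β] (X : Ω → α) (Y : Ω → β) (x : α) :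
    ∑ y, pr w (fun ω => (X ω, Y ω)) (x, y) = pr w X x := by
  classical
  unfold pr
  rw [Finset.sum_comm]
  refine Finset.sum_congr rfl fun ω _ => ?_
  by_cases hx : X ω = x <;> simp [Prod.ext_iff, hx]

lemma pr_iff (w : Ω → ℝ) {α β : Type} (F : Ω → α) (G : Ω → β) (v : α) (u : β)
    (h : ∀ ω, F ω = v ↔ G ω = u) : pr w F v = pr w G u := by
  classical
  unfold pr
  exact Finset.sum_congr rfl fun ω _ => by simp [h ω]

lemma condIndep_H {α β γ : Type} [Fintype α] [Fintype β] [Fintype γ]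
    (w : Ω → ℝ) (hw : ∀ ω, 0 ≤ w ω) (X : Ω → α) (Y : Ω → β) (Z : Ω → γ)
    (h : CondIndep w X Y Z) :
    H w (fun ω => (X ω, Y ω, Z ω)) + H w Z
      = H w (fun ω => (X ω, Z ω)) + H w (fun ω => (Y ω, Z ω)) := by
  classical
  set q3 : α → β → γ → ℝ := fun x y z => pr w (fun ω => (X ω, Y ω, Z ω)) (x, y, z) with hq3
  set qXZ : α → γ → ℝ := fun x z => pr w (fun ω => (X ω, Z ω)) (x, z) with hqXZ
  set qYZ : β → γ → ℝ := fun y z => pr w (fun ω => (Y ω, Z ω)) (y, z) with hqYZ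
  set qZ : γ → ℝ := fun z => pr w Z z with hqZ
  -- marginals
  have mY : ∀ x z, ∑ y, q3 x y z = qXZ x z := by
    intro x z
    have : ∀ y, q3 x y z = pr w (fun ω => ((X ω, Z ω), Y ω)) ((x, z), y) := by
      intro y
      exact pr_iff w _ _ _ _ (fun ω => by simp [Prod.ext_iff]; tauto)
    simp_rw [this]
    exact pr_marg w _ _ _
  have mX : ∀ y z, ∑ x, q3 x y z = qYZ y z := by
    intro y z
    have : ∀ x, q3 x y z = pr w (fun ω => ((Y ω, Z ω), X ω)) ((y, z), x) := by
      intro x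
      exact pr_iff w _ _ _ _ (fun ω => by simp [Prod.ext_iff]; tauto)
    simp_rw [this]
    exact pr_marg w _ _ _
  have mXY : ∀ z, ∑ x, ∑ y, q3 x y z = qZ z := by
    intro z
    have h1 : ∀ x, ∑ y, q3 x y z = pr w (fun ω => (Z ω, X ω)) (z, x) := by
      intro x
      have := mY x z
      rw [this]
      exact pr_iff w _ _ _ _ (fun ω => by simp [Prod.ext_iff]; tauto)
    simp_rw [h1]
    exact pr_marg w _ _ _
  -- termwise identity
  have key : ∀ x y z, q3 x y z * Real.logb 2 (q3 x y z)
      = q3 x y z * Real.logb 2 (qXZ x z) + q3 x y z * Real.logb 2 (qYZ y z)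
        - q3 x y z * Real.logb 2 (qZ z) := by
    intro x y z
    by_cases h0 : q3 x y z = 0
    · simp [h0]
    · have hpos : 0 < q3 x y z :=
        lt_of_le_of_ne (pr_nonneg w hw _ _) (Ne.symm h0)
      have hZpos : 0 < qZ z := lt_of_lt_of_le hpos
        (pr_mono w hw _ _ _ _ (fun ω hω => by
          simp [Prod.ext_iff] at hω; exact hω.2.2))
      have hXZpos : 0 < qXZ x z := lt_of_lt_of_le hpos
        (pr_mono w hw _ _ _ _ (fun ω hω => by
          simp [Prod.ext_iff] at hω; simp [Prod.ext_iff, hω.1, hω.2.2]))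
      have hYZpos : 0 < qYZ y z := lt_of_lt_of_le hpos
        (pr_mono w hw _ _ _ _ (fun ω hω => by
          simp [Prod.ext_iff] at hω; simp [Prod.ext_iff, hω.2.1, hω.2.2]))
      have hci := h x y z
      have hq : q3 x y z = qXZ x z * qYZ y z / qZ z := by
        field_simp
        linarith [hci]
      rw [hq, Real.logb_div (mul_ne_zero hXZpos.ne' hYZpos.ne') hZpos.ne',
        Real.logb_mul hXZpos.ne' hYZpos.ne']
      ring
  -- sum computations
  have e1 : ∑ x, ∑ y, ∑ z, q3 x y z * Real.logb 2 (qXZ x z)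
      = ∑ x, ∑ z, qXZ x z * Real.logb 2 (qXZ x z) := by
    refine Finset.sum_congr rfl fun x _ => ?_
    rw [Finset.sum_comm]
    refine Finset.sum_congr rfl fun z _ => ?_
    rw [← Finset.sum_mul, mY x z]
  have e2 : ∑ x, ∑ y, ∑ z, q3 x y z * Real.logb 2 (qYZ y z)
      = ∑ y, ∑ z, qYZ y z * Real.logb 2 (qYZ y z) := by
    rw [Finset.sum_comm]
    refine Finset.sum_congr rfl fun y _ => ?_
    rw [Finset.sum_comm]
    refine Finset.sum_congr rfl fun z _ => ?_
    rw [← Finset.sum_mul, mX y z]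
  have e3 : ∑ x, ∑ y, ∑ z, q3 x y z * Real.logb 2 (qZ z)
      = ∑ z, qZ z * Real.logb 2 (qZ z) := by
    have step : ∀ x, ∑ y, ∑ z, q3 x y z * Real.logb 2 (qZ z)
        = ∑ z, (∑ y, q3 x y z) * Real.logb 2 (qZ z) := by
      intro x
      rw [Finset.sum_comm]
      exact Finset.sum_congr rfl fun z _ => (Finset.sum_mul _ _ _).symm
    simp_rw [step]
    rw [Finset.sum_comm]
    refine Finset.sum_congr rfl fun z _ => ?_
    rw [← Finset.sum_mul, mXY z]
  -- expand entropies
  have hH3 : H w (fun ω => (X ω, Y ω, Z ω))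
      = -∑ x, ∑ y, ∑ z, q3 x y z * Real.logb 2 (q3 x y z) := by
    unfold H
    simp [Fintype.sum_prod_type, hq3]
  have hHXZ : H w (fun ω => (X ω, Z ω))
      = -∑ x, ∑ z, qXZ x z * Real.logb 2 (qXZ x z) := by
    unfold H
    simp [Fintype.sum_prod_type, hqXZ]
  have hHYZ : H w (fun ω => (Y ω, Z ω))
      = -∑ y, ∑ z, qYZ y z * Real.logb 2 (qYZ y z) := by
    unfold H
    simp [Fintype.sum_prod_type, hqYZ]
  have hHZ : H w Z = -∑ z, qZ z * Real.logb 2 (qZ z) := by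
    unfold H
    simp [hqZ]
  have sumkey : ∑ x, ∑ y, ∑ z, q3 x y z * Real.logb 2 (q3 x y z)
      = (∑ x, ∑ z, qXZ x z * Real.logb 2 (qXZ x z))
        + (∑ y, ∑ z, qYZ y z * Real.logb 2 (qYZ y z))
        - ∑ z, qZ z * Real.logb 2 (qZ z) := by
    simp_rw [key, Finset.sum_sub_distrib, Finset.sum_add_distrib]
    rw [e1, e2, e3]
  rw [hH3, hHXZ, hHYZ, hHZ, sumkey]
  ring

end Aux

set_option maxHeartbeats 2000000 in
theorem stmt0 {Ω α β γ κ : Type} [Fintype Ω] [Fintype α] [Fintype β] [Fintype γ] [Fintype κ]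
    (w : Ω → ℝ) (hw : IsPMF w) (A : Ω → α) (B : Ω → β) (E : Ω → γ) (U : Ω → κ)
    (hMarkov : CondIndep w U (fun ω => (B ω, E ω)) A) :
    (MI w A B - MI w A E) - (cMI w A B U - cMI w A E U) = MI w B U - MI w E U := by
  classical
  obtain ⟨hw0, -⟩ := hw
  -- marginal conditional independence: U ⟂ B | A and U ⟂ E | A
  have margB : ∀ u b a, ∑ e, pr w (fun ω => (U ω, (B ω, E ω), A ω)) (u, (b, e), a)
      = pr w (fun ω => (U ω, B ω, A ω)) (u, b, a) := by
    intro u b a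
    unfold pr
    rw [Finset.sum_comm]
    refine Finset.sum_congr rfl fun ω _ => ?_
    by_cases h1 : U ω = u <;> by_cases h2 : B ω = b <;> by_cases h3 : A ω = a <;>
      simp [Prod.ext_iff, h1, h2, h3]
  have margE : ∀ u c a, ∑ b, pr w (fun ω => (U ω, (B ω, E ω), A ω)) (u, (b, c), a)
      = pr w (fun ω => (U ω, E ω, A ω)) (u, c, a) := by
    intro u c a
    unfold pr
    rw [Finset.sum_comm]
    refine Finset.sum_congr rfl fun ω _ => ?_
    by_cases h1 : U ω = u <;> by_cases h2 : E ω = c <;> by_cases h3 : A ω = a <;>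
      simp [Prod.ext_iff, h1, h2, h3]
  have margBA : ∀ b a, ∑ e, pr w (fun ω => ((B ω, E ω), A ω)) ((b, e), a)
      = pr w (fun ω => (B ω, A ω)) (b, a) := by
    intro b a
    unfold pr
    rw [Finset.sum_comm]
    refine Finset.sum_congr rfl fun ω _ => ?_
    by_cases h2 : B ω = b <;> by_cases h3 : A ω = a <;>
      simp [Prod.ext_iff, h2, h3]
  have margEA : ∀ c a, ∑ b, pr w (fun ω => ((B ω, E ω), A ω)) ((b, c), a)
      = pr w (fun ω => (E ω, A ω)) (c, a) := by
    intro c a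
    unfold pr
    rw [Finset.sum_comm]
    refine Finset.sum_congr rfl fun ω _ => ?_
    by_cases h2 : E ω = c <;> by_cases h3 : A ω = a <;>
      simp [Prod.ext_iff, h2, h3]
  have ciB : CondIndep w U B A := by
    intro u b a
    have := fun e => hMarkov u (b, e) a
    calc pr w (fun ω => (U ω, B ω, A ω)) (u, b, a) * pr w A a
        = (∑ e, pr w (fun ω => (U ω, (B ω, E ω), A ω)) (u, (b, e), a)) * pr w A a := by
          rw [margB]
      _ = ∑ e, pr w (fun ω => (U ω, (B ω, E ω), A ω)) (u, (b, e), a) * pr w A a := by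
          rw [Finset.sum_mul]
      _ = ∑ e, pr w (fun ω => (U ω, A ω)) (u, a) * pr w (fun ω => ((B ω, E ω), A ω)) ((b, e), a) := by
          exact Finset.sum_congr rfl fun e _ => this e
      _ = pr w (fun ω => (U ω, A ω)) (u, a) * ∑ e, pr w (fun ω => ((B ω, E ω), A ω)) ((b, e), a) := by
          rw [Finset.mul_sum]
      _ = pr w (fun ω => (U ω, A ω)) (u, a) * pr w (fun ω => (B ω, A ω)) (b, a) := by
          rw [margBA]
  have ciE : CondIndep w U E A := by
    intro u c a
    have := fun b => hMarkov u (b, c) a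
    calc pr w (fun ω => (U ω, E ω, A ω)) (u, c, a) * pr w A a
        = (∑ b, pr w (fun ω => (U ω, (B ω, E ω), A ω)) (u, (b, c), a)) * pr w A a := by
          rw [margE]
      _ = ∑ b, pr w (fun ω => (U ω, (B ω, E ω), A ω)) (u, (b, c), a) * pr w A a := by
          rw [Finset.sum_mul]
      _ = ∑ b, pr w (fun ω => (U ω, A ω)) (u, a) * pr w (fun ω => ((B ω, E ω), A ω)) ((b, c), a) := by
          exact Finset.sum_congr rfl fun b _ => this b
      _ = pr w (fun ω => (U ω, A ω)) (u, a) * ∑ b, pr w (fun ω => ((B ω, E ω), A ω)) ((b, c), a) := by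
          rw [Finset.mul_sum]
      _ = pr w (fun ω => (U ω, A ω)) (u, a) * pr w (fun ω => (E ω, A ω)) (c, a) := by
          rw [margEA]
  have FB := condIndep_H w hw0 U B A ciB
  have FE := condIndep_H w hw0 U E A ciE
  -- entropy relabelings
  have hUA : H w (fun ω => (U ω, A ω)) = H w (fun ω => (A ω, U ω)) :=
    H_comp (Equiv.prodComm α κ) w (fun ω => (A ω, U ω))
  have hBA : H w (fun ω => (B ω, A ω)) = H w (fun ω => (A ω, B ω)) :=
    H_comp (Equiv.prodComm α β) w (fun ω => (A ω, B ω))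
  have hEA : H w (fun ω => (E ω, A ω)) = H w (fun ω => (A ω, E ω)) :=
    H_comp (Equiv.prodComm α γ) w (fun ω => (A ω, E ω))
  have hUBA : H w (fun ω => (U ω, B ω, A ω)) = H w (fun ω => (A ω, B ω, U ω)) :=
    H_comp ⟨fun p => (p.2.2, p.2.1, p.1), fun p => (p.2.2, p.2.1, p.1),
      fun _ => rfl, fun _ => rfl⟩ w (fun ω => (A ω, B ω, U ω))
  have hUEA : H w (fun ω => (U ω, E ω, A ω)) = H w (fun ω => (A ω, E ω, U ω)) :=
    H_comp ⟨fun p => (p.2.2, p.2.1, p.1), fun p => (p.2.2, p.2.1, p.1),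
      fun _ => rfl, fun _ => rfl⟩ w (fun ω => (A ω, E ω, U ω))
  rw [hUA, hBA, hUBA] at FB
  rw [hUA, hEA, hUEA] at FE
  simp only [MI, cMI, condH]
  linarith
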